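/- Let 1 ≤ p₁, p₂ < ∞ and 0 < r ≤ 1, and let σ : 𝕋ⁿ × ℤⁿ → ℂ be such that x ↦ σ(x,k) is measurable for every k ∈ ℤⁿ and there exist constants C > 0 and s > n with |σ(x,k)| ≤ C ⟨k⟩^{−s/r} for all x ∈ 𝕋ⁿ and k ∈ ℤⁿ. Then the operator A = Op(σ) with symbol σ is a well-defined bounded linear operator from L^{p₁}(μ) to L^{p₂}(μ) and is r-nuclear. -/

import Mathlib

open MeasureTheory ENNReal NNReal Real

noncomputable section

/-- For `0 < r ≤ 1`, a bounded linear operator `T : E → F` between complex Banach spaces is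
`r`-nuclear if there are sequences `(x'_m)` of continuous functionals on `E` and `(y_m)` in `F`
with `T v = ∑ₘ x'_m(v) • y_m` for all `v` and `∑ₘ ‖x'_m‖^r ‖y_m‖^r < ∞`. -/
def IsRNuclear {E F : Type*} [NormedAddCommGroup E] [NormedSpace ℂ E]
    [NormedAddCommGroup F] [NormedSpace ℂ F] (r : ℝ) (T : E →L[ℂ] F) : Prop :=
  ∃ (x' : ℕ → (E →L[ℂ] ℂ)) (y : ℕ → F),
    (∀ v : E, HasSum (fun m => x' m v • y m) (T v)) ∧
    Summable (fun m => ‖x' m‖ ^ r * ‖y m‖ ^ r)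

/-- The `n`-torus `𝕋ⁿ = (ℝ/ℤ)ⁿ`; its `volume` measure is the product of the normalized
Haar measures of the circle factors, a probability measure. -/
abbrev Torus (n : ℕ) := Fin n → AddCircle (1 : ℝ)

/-- The character `e_k(x) = ∏ i, exp(2πi k_i x_i)` on the `n`-torus. -/
noncomputable def eK {n : ℕ} (k : Fin n → ℤ) (x : Torus n) : ℂ :=
  ∏ i, (fourier (k i) : C(AddCircle (1 : ℝ), ℂ)) (x i)

/-- The `k`-th Fourier coefficient `f̂(k) = ∫ f conj(e_k) dμ` of `f : 𝕋ⁿ → ℂ`. -/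
noncomputable def fourierCoeffT {n : ℕ} (f : Torus n → ℂ) (k : Fin n → ℤ) : ℂ :=
  ∫ x, f x * (starRingEnd ℂ) (eK k x)

/-- `A` is the operator `Op(σ)` with symbol `σ`: `A f = ∑_k f̂(k) • (σ(·,k) e_k)`,
the series converging in `L^{p₂}(μ)`. -/
def IsOp {n : ℕ} {p₁ p₂ : ℝ≥0∞} [Fact (1 ≤ p₁)] [Fact (1 ≤ p₂)]
    (σ : Torus n → (Fin n → ℤ) → ℂ)
    (A : Lp ℂ p₁ (volume : Measure (Torus n)) →L[ℂ] Lp ℂ p₂ (volume : Measure (Torus n))) :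
    Prop :=
  ∃ F : (Fin n → ℤ) → Lp ℂ p₂ (volume : Measure (Torus n)),
    (∀ k, ⇑(F k) =ᵐ[volume] fun x => σ x k * eK k x) ∧
    ∀ f : Lp ℂ p₁ (volume : Measure (Torus n)),
      HasSum (fun k => fourierCoeffT (⇑f) k • F k) (A f)

/-- The weight `⟨k⟩ = (1 + 4π² ∑ᵢ kᵢ²)^{1/2}` on `ℤⁿ`. -/
noncomputable def jpW {n : ℕ} (k : Fin n → ℤ) : ℝ :=
  (1 + 4 * π ^ 2 * ∑ i, ((k i : ℝ)) ^ 2) ^ ((1 : ℝ) / 2)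



lemma summable_int_aux {t : ℝ} (ht : 1/2 < t) :
    Summable fun m : ℤ => (1 + 4*π^2*(m:ℝ)^2) ^ (-t) := by
  refine Summable.of_norm_bounded_eventually (g := fun m : ℤ => |(m:ℝ)| ^ (-(2*t)))
    (summable_abs_int_rpow (by linarith)) ?_
  have : {m : ℤ | ¬ ‖(1 + 4*π^2*(m:ℝ)^2) ^ (-t)‖ ≤ |(m:ℝ)| ^ (-(2*t))} ⊆ {0} := by
    intro m hm
    simp only [Set.mem_setOf_eq, not_le] at hm
    by_contra h0
    have hm0 : (m : ℝ) ≠ 0 := by exact_mod_cast h0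
    have h1 : (0:ℝ) < (m:ℝ)^2 := by positivity
    have hpi : (9:ℝ) < π^2 := by nlinarith [Real.pi_gt_three]
    have h9 : 9*(m:ℝ)^2 ≤ π^2*(m:ℝ)^2 := by nlinarith [sq_nonneg (m:ℝ)]
    have h2 : ((m:ℝ)^2) ≤ 1 + 4*π^2*(m:ℝ)^2 := by nlinarith [sq_nonneg (m:ℝ)]
    have h3 : (1 + 4*π^2*(m:ℝ)^2) ^ (-t) ≤ ((m:ℝ)^2) ^ (-t) :=
      Real.rpow_le_rpow_of_nonpos h1 h2 (by linarith)
    have h4 : ((m:ℝ)^2) ^ (-t) = |(m:ℝ)| ^ (-(2*t)) := by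
      rw [← sq_abs, ← Real.rpow_natCast |(m:ℝ)| 2, ← Real.rpow_mul (abs_nonneg _)]
      congr 1
      push_cast
      ring
    have h5 : ‖(1 + 4*π^2*(m:ℝ)^2) ^ (-t)‖ = (1 + 4*π^2*(m:ℝ)^2) ^ (-t) := by
      rw [Real.norm_eq_abs, abs_of_nonneg]
      positivity
    rw [h5, ← h4] at hm
    exact absurd h3 (not_le.mpr hm)
  exact Set.Finite.subset (Set.finite_singleton 0) this

lemma summable_pi_aux (g : ℤ → ℝ) (hg : Summable g) (h0 : ∀ m, 0 ≤ g m) :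
    ∀ n : ℕ, Summable fun k : Fin n → ℤ => ∏ i, g (k i) := by
  intro n
  induction n with
  | zero =>
      haveI : Unique (Fin 0 → ℤ) := ⟨⟨fun i => i.elim0⟩, fun a => funext fun i => i.elim0⟩
      haveI : Fintype (Fin 0 → ℤ) := Fintype.ofSubsingleton default
      exact (hasSum_fintype _).summable
  | succ n ih =>
      set G : (Fin n → ℤ) → ℝ := fun k => ∏ i, g (k i) with hG
      have hG0 : ∀ k, 0 ≤ G k := fun k => Finset.prod_nonneg fun i _ => h0 _
      have hF : Summable fun p : ℤ × (Fin n → ℤ) => g p.1 * G p.2 :=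
        Summable.mul_of_nonneg hg ih h0 hG0
      refine (((Fin.consEquiv fun _ : Fin (n+1) => ℤ).symm.summable_iff).mpr hF).congr fun k => ?_
      show g (k 0) * G (fun i => k i.succ) = ∏ i, g (k i)
      rw [hG, Fin.prod_univ_succ]

lemma summable_jpW_rpow {n : ℕ} (hn : 1 ≤ n) {s : ℝ} (hs : (n:ℝ) < s) :
    Summable fun k : Fin n → ℤ => jpW k ^ (-s) := by
  have hn0 : (0:ℝ) < n := by exact_mod_cast hn
  set t : ℝ := s / (2*n) with htdef
  have ht : 1/2 < t := by
    rw [htdef, lt_div_iff₀ (by positivity)]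
    linarith
  have ht0 : 0 ≤ t := by linarith
  have hg0 : ∀ m : ℤ, 0 ≤ (1 + 4*π^2*(m:ℝ)^2) ^ (-t) := fun m => Real.rpow_nonneg (by positivity) _
  refine Summable.of_nonneg_of_le (fun k => Real.rpow_nonneg (Real.rpow_nonneg (by positivity) _) _)
    (fun k => ?_) (summable_pi_aux _ (summable_int_aux ht) hg0 n)
  -- jpW k ^ (-s) ≤ ∏ i, (1 + 4π²(k i)²)^(-t)
  set W : ℝ := 1 + 4 * π ^ 2 * ∑ i, ((k i : ℝ)) ^ 2 with hWdef
  have hW1 : (1:ℝ) ≤ W := by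
    have : (0:ℝ) ≤ ∑ i, ((k i : ℝ))^2 := Finset.sum_nonneg fun i _ => sq_nonneg _
    nlinarith [Real.pi_gt_three]
  have hW0 : (0:ℝ) < W := by linarith
  have hai : ∀ i : Fin n, (0:ℝ) < 1 + 4*π^2*((k i : ℝ))^2 := fun i => by positivity
  have haiW : ∀ i : Fin n, 1 + 4*π^2*((k i : ℝ))^2 ≤ W := by
    intro i
    have : ((k i : ℝ))^2 ≤ ∑ j, ((k j : ℝ))^2 :=
      Finset.single_le_sum (fun j _ => sq_nonneg ((k j : ℝ))) (Finset.mem_univ i)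
    nlinarith [Real.pi_gt_three]
  have hprod_pos : (0:ℝ) < ∏ i, (1 + 4*π^2*((k i : ℝ))^2) :=
    Finset.prod_pos fun i _ => hai i
  have hprodW : ∏ i, (1 + 4*π^2*((k i : ℝ))^2) ≤ W ^ n := by
    calc ∏ i, (1 + 4*π^2*((k i : ℝ))^2) ≤ ∏ _i : Fin n, W :=
          Finset.prod_le_prod (fun i _ => (hai i).le) (fun i _ => haiW i)
      _ = W ^ n := by simp
  have key : jpW k ^ (-s) = W ^ (-(s/2)) := by
    rw [jpW, ← hWdef, ← Real.rpow_mul hW0.le]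
    congr 1
    ring
  rw [key]
  have h1 : (W ^ n : ℝ) ^ (-t) ≤ (∏ i, (1 + 4*π^2*((k i : ℝ))^2)) ^ (-t) :=
    Real.rpow_le_rpow_of_nonpos hprod_pos hprodW (by linarith)
  have h2 : (W ^ n : ℝ) ^ (-t) = W ^ (-(s/2)) := by
    rw [← Real.rpow_natCast W n, ← Real.rpow_mul hW0.le]
    congr 1
    rw [htdef]; field_simp
  have h3 : (∏ i, (1 + 4*π^2*((k i : ℝ))^2)) ^ (-t) = ∏ i, (1 + 4*π^2*((k i : ℝ))^2) ^ (-t) :=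
    (Real.finset_prod_rpow _ _ (fun i _ => (hai i).le) _).symm
  rw [← h2, ← h3] at *
  exact h1.trans_eq h3


lemma jpW_nonneg {n : ℕ} (k : Fin n → ℤ) : 0 ≤ jpW k := by
  unfold jpW
  positivity

instance torusProb (n : ℕ) : IsProbabilityMeasure (volume : Measure (Torus n)) := by
  haveI : IsProbabilityMeasure (volume : Measure (AddCircle (1:ℝ))) :=
    ⟨by simp [AddCircle.measure_univ]⟩
  infer_instance

lemma eK_continuous {n : ℕ} (k : Fin n → ℤ) : Continuous (eK k) :=
  continuous_finset_prod _ fun i _ => (map_continuous (fourier (k i))).comp (continuous_apply i)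

lemma norm_eK {n : ℕ} (k : Fin n → ℤ) (x : Torus n) : ‖eK k x‖ = 1 := by
  unfold eK
  rw [norm_prod]
  simp [fourier, Circle.norm_coe]

lemma norm_Lp_le_of_ae_bound {α : Type*} [MeasurableSpace α] {μ : Measure α}
    [IsProbabilityMeasure μ] {p : ℝ≥0∞} [Fact (1 ≤ p)] (G : Lp ℂ p μ) {g : α → ℂ}
    (hG : ⇑G =ᵐ[μ] g) {D : ℝ} (hD : 0 ≤ D) (hb : ∀ x, ‖g x‖ ≤ D) : ‖G‖ ≤ D := by
  rw [Lp.norm_def, eLpNorm_congr_ae hG]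
  have h := eLpNorm_le_of_ae_bound (μ := μ) (p := p) (f := g) (Filter.Eventually.of_forall hb)
  rw [measure_univ, ENNReal.one_rpow, one_mul] at h
  calc (eLpNorm g p μ).toReal ≤ (ENNReal.ofReal D).toReal :=
        ENNReal.toReal_mono ENNReal.ofReal_ne_top h
    _ = D := ENNReal.toReal_ofReal hD

section coeff

variable {n : ℕ} {p : ℝ≥0∞} [Fact (1 ≤ p)]

lemma integrable_coeff (f : Lp ℂ p (volume : Measure (Torus n))) (k : Fin n → ℤ) :
    Integrable (fun x => (f : Torus n → ℂ) x * (starRingEnd ℂ) (eK k x)) volume := by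
  have h1 : MemLp (⇑f) 1 (volume : Measure (Torus n)) :=
    (Lp.memLp f).mono_exponent Fact.out
  have hint : Integrable (⇑f) volume := memLp_one_iff_integrable.mp h1
  have hconj : Continuous fun x : Torus n => (starRingEnd ℂ) (eK k x) :=
    Complex.continuous_conj.comp (eK_continuous k)
  have := Integrable.bdd_mul hint hconj.aestronglyMeasurable
    (c := 1) (Filter.Eventually.of_forall fun x => by rw [RCLike.norm_conj, norm_eK])
  exact this.congr (Filter.Eventually.of_forall fun x => by ring)

lemma coeff_bound (f : Lp ℂ p (volume : Measure (Torus n))) (k : Fin n → ℤ) :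
    ‖fourierCoeffT (⇑f) k‖ ≤ ‖f‖ := by
  have hmeas : AEStronglyMeasurable (⇑f) (volume : Measure (Torus n)) :=
    (Lp.memLp f).aestronglyMeasurable
  have h0 : ‖fourierCoeffT (⇑f) k‖ ≤ ∫ x, ‖(f : Torus n → ℂ) x * (starRingEnd ℂ) (eK k x)‖ :=
    norm_integral_le_integral_norm _
  have h1 : (fun x => ‖(f : Torus n → ℂ) x * (starRingEnd ℂ) (eK k x)‖)
      = fun x => ‖(f : Torus n → ℂ) x‖ := by
    funext x
    rw [norm_mul, RCLike.norm_conj, norm_eK, mul_one]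
  rw [h1] at h0
  refine h0.trans ?_
  rw [integral_norm_eq_lintegral_enorm hmeas, Lp.norm_def, ← eLpNorm_one_eq_lintegral_enorm]
  refine ENNReal.toReal_mono (Lp.eLpNorm_ne_top f) ?_
  exact eLpNorm_le_eLpNorm_of_exponent_le Fact.out hmeas

/-- The `k`-th Fourier coefficient as a continuous linear functional on `L^p`. -/
noncomputable def coeffCLM (n : ℕ) (p : ℝ≥0∞) [Fact (1 ≤ p)] (k : Fin n → ℤ) :
    Lp ℂ p (volume : Measure (Torus n)) →L[ℂ] ℂ :=
  LinearMap.mkContinuous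
    { toFun := fun f => fourierCoeffT (⇑f) k
      map_add' := fun f h => by
        have hfg : (fun x => ((f + h : Lp ℂ p (volume : Measure (Torus n))) : Torus n → ℂ) x
              * (starRingEnd ℂ) (eK k x))
            =ᵐ[(volume : Measure (Torus n))]
            (fun x => (f : Torus n → ℂ) x * (starRingEnd ℂ) (eK k x)
              + (h : Torus n → ℂ) x * (starRingEnd ℂ) (eK k x)) := by
          filter_upwards [Lp.coeFn_add f h] with x hx
          rw [hx]
          simp [add_mul]
        unfold fourierCoeffT
        beta_reduce
        rw [integral_congr_ae hfg, integral_add (integrable_coeff f k) (integrable_coeff h k)]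
      map_smul' := fun c f => by
        have hcf : (fun x => ((c • f : Lp ℂ p (volume : Measure (Torus n))) : Torus n → ℂ) x
              * (starRingEnd ℂ) (eK k x))
            =ᵐ[(volume : Measure (Torus n))]
            (fun x => c * ((f : Torus n → ℂ) x * (starRingEnd ℂ) (eK k x))) := by
          filter_upwards [Lp.coeFn_smul c f] with x hx
          rw [hx]
          simp [smul_eq_mul]
          ring
        show ∫ x, ((c • f : Lp ℂ p (volume : Measure (Torus n))) : Torus n → ℂ) x
              * (starRingEnd ℂ) (eK k x)
            = (RingHom.id ℂ) c • ∫ x, (f : Torus n → ℂ) x * (starRingEnd ℂ) (eK k x)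
        rw [integral_congr_ae hcf, MeasureTheory.integral_const_mul]
        rfl }
    1 (fun f => by simpa using coeff_bound f k)

@[simp] lemma coeffCLM_apply (k : Fin n → ℤ) (f : Lp ℂ p (volume : Measure (Torus n))) :
    coeffCLM n p k f = fourierCoeffT (⇑f) k := rfl

lemma coeffCLM_norm_le (k : Fin n → ℤ) : ‖coeffCLM n p k‖ ≤ 1 :=
  LinearMap.mkContinuous_norm_le _ zero_le_one _

end coeff


/-- **`r`-nuclearity from a pointwise decay estimate on the symbol.** Let `1 ≤ p₁, p₂ < ∞`,
`0 < r ≤ 1`, and `σ : 𝕋ⁿ × ℤⁿ → ℂ` with `σ(·,k)` measurable and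
`|σ(x,k)| ≤ C ⟨k⟩^{-s/r}` for all `x, k`, for some `C > 0`, `s > n`. Then `Op(σ)` is a
well-defined bounded operator from `L^{p₁}(μ)` to `L^{p₂}(μ)` and is `r`-nuclear. -/
theorem op_symbol_pointwise_decay_rNuclear (n : ℕ) (hn : 1 ≤ n)
    (p₁ p₂ : ℝ≥0∞) [Fact (1 ≤ p₁)] [Fact (1 ≤ p₂)] (hp₁ : p₁ ≠ ∞) (hp₂ : p₂ ≠ ∞)
    (r : ℝ) (hr0 : 0 < r) (hr1 : r ≤ 1)
    (σ : Torus n → (Fin n → ℤ) → ℂ)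
    (hmeas : ∀ k, Measurable (fun x => σ x k))
    (C : ℝ) (hC : 0 < C) (s : ℝ) (hs : (n : ℝ) < s)
    (hdecay : ∀ (x : Torus n) (k : Fin n → ℤ), ‖σ x k‖ ≤ C * jpW k ^ (-(s / r))) :
    (∃ A : Lp ℂ p₁ (volume : Measure (Torus n)) →L[ℂ]
          Lp ℂ p₂ (volume : Measure (Torus n)), IsOp σ A) ∧
    ∀ A : Lp ℂ p₁ (volume : Measure (Torus n)) →L[ℂ]
          Lp ℂ p₂ (volume : Measure (Torus n)),
      IsOp σ A → IsRNuclear r A := by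
  classical
  -- basic positivity facts
  have hn0 : (0:ℝ) < n := by exact_mod_cast hn
  have hs0 : (0:ℝ) < s := lt_trans hn0 hs
  have hr : r ≠ 0 := ne_of_gt hr0
  have hsr : (n:ℝ) < s / r := lt_of_lt_of_le hs (le_div_self hs0.le hr0 hr1)
  -- summability of the decay weights
  have hsumW : Summable fun k : Fin n → ℤ => jpW k ^ (-(s/r)) := summable_jpW_rpow hn hsr
  have hsumC : Summable fun k : Fin n → ℤ => C * jpW k ^ (-(s/r)) := hsumW.mul_left C
  have hb0 : ∀ k : Fin n → ℤ, 0 ≤ C * jpW k ^ (-(s/r)) := fun k =>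
    mul_nonneg hC.le (Real.rpow_nonneg (jpW_nonneg k) _)
  -- the functions σ(·,k) e_k and their Lp bound
  set g : (Fin n → ℤ) → Torus n → ℂ := fun k x => σ x k * eK k x with hgdef
  have hgmeas : ∀ k, AEStronglyMeasurable (g k) (volume : Measure (Torus n)) := fun k =>
    ((hmeas k).mul (eK_continuous k).measurable).aestronglyMeasurable
  have hgbd : ∀ k x, ‖g k x‖ ≤ C * jpW k ^ (-(s/r)) := fun k x => by
    rw [hgdef]
    simp only [norm_mul, norm_eK, mul_one]
    exact hdecay x k
  have hFnorm : ∀ (k : Fin n → ℤ) (G : Lp ℂ p₂ (volume : Measure (Torus n))),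
      ⇑G =ᵐ[volume] g k → ‖G‖ ≤ C * jpW k ^ (-(s/r)) := fun k G hG =>
    norm_Lp_le_of_ae_bound G hG (hb0 k) (hgbd k)
  -- the Lp elements
  have hgmem : ∀ k, MemLp (g k) p₂ (volume : Measure (Torus n)) := fun k =>
    MemLp.of_bound (hgmeas k) _ (Filter.Eventually.of_forall (hgbd k))
  set F₀ : (Fin n → ℤ) → Lp ℂ p₂ (volume : Measure (Torus n)) :=
    fun k => (hgmem k).toLp (g k) with hF₀def
  have hF₀ : ∀ k, ⇑(F₀ k) =ᵐ[volume] g k := fun k => (hgmem k).coeFn_toLp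
  -- term bounds and summability of the series
  have hterm : ∀ (f : Lp ℂ p₁ (volume : Measure (Torus n))) (k : Fin n → ℤ),
      ‖fourierCoeffT (⇑f) k • F₀ k‖ ≤ C * jpW k ^ (-(s/r)) * ‖f‖ := by
    intro f k
    rw [norm_smul, mul_comm]
    exact mul_le_mul (hFnorm k (F₀ k) (hF₀ k)) (coeff_bound f k) (norm_nonneg _) (hb0 k)
  have hsummable : ∀ f : Lp ℂ p₁ (volume : Measure (Torus n)),
      Summable fun k => fourierCoeffT (⇑f) k • F₀ k := fun f =>
    Summable.of_norm_bounded (hsumC.mul_right ‖f‖) (hterm f)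
  -- the operator as a linear map
  set T : Lp ℂ p₁ (volume : Measure (Torus n)) →ₗ[ℂ] Lp ℂ p₂ (volume : Measure (Torus n)) :=
    { toFun := fun f => ∑' k, fourierCoeffT (⇑f) k • F₀ k
      map_add' := fun f h => by
        have he : ∀ k : Fin n → ℤ, fourierCoeffT (⇑(f + h)) k • F₀ k
            = fourierCoeffT (⇑f) k • F₀ k + fourierCoeffT (⇑h) k • F₀ k := by
          intro k
          have := (coeffCLM n p₁ k).map_add f h
          simp only [coeffCLM_apply] at this
          rw [this, add_smul]
        calc (∑' k, fourierCoeffT (⇑(f + h)) k • F₀ k)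
            = ∑' k, (fourierCoeffT (⇑f) k • F₀ k + fourierCoeffT (⇑h) k • F₀ k) :=
              tsum_congr he
          _ = _ := Summable.tsum_add (hsummable f) (hsummable h)
      map_smul' := fun c f => by
        have he : ∀ k : Fin n → ℤ, fourierCoeffT (⇑(c • f)) k • F₀ k
            = c • (fourierCoeffT (⇑f) k • F₀ k) := by
          intro k
          have := (coeffCLM n p₁ k).map_smul c f
          simp only [coeffCLM_apply, RingHom.id_apply, smul_eq_mul] at this
          rw [this, mul_smul]
        calc (∑' k, fourierCoeffT (⇑(c • f)) k • F₀ k)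
            = ∑' k, c • (fourierCoeffT (⇑f) k • F₀ k) := tsum_congr he
          _ = c • ∑' k, fourierCoeffT (⇑f) k • F₀ k :=
              (((hsummable f).hasSum.const_smul c).tsum_eq)
          _ = _ := rfl } with hTdef
  -- continuity
  set S : ℝ := ∑' k : Fin n → ℤ, C * jpW k ^ (-(s/r)) with hSdef
  have hTbound : ∀ f : Lp ℂ p₁ (volume : Measure (Torus n)), ‖T f‖ ≤ S * ‖f‖ := by
    intro f
    have hns : Summable fun k => ‖fourierCoeffT (⇑f) k • F₀ k‖ :=
      Summable.of_nonneg_of_le (fun k => norm_nonneg _) (hterm f) (hsumC.mul_right ‖f‖)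
    have h1 : ‖∑' k, fourierCoeffT (⇑f) k • F₀ k‖ ≤ ∑' k, ‖fourierCoeffT (⇑f) k • F₀ k‖ :=
      norm_tsum_le_tsum_norm hns
    have h2 : (∑' k, ‖fourierCoeffT (⇑f) k • F₀ k‖)
        ≤ ∑' k : Fin n → ℤ, C * jpW k ^ (-(s/r)) * ‖f‖ :=
      Summable.tsum_le_tsum (hterm f) hns (hsumC.mul_right ‖f‖)
    have h3 : (∑' k : Fin n → ℤ, C * jpW k ^ (-(s/r)) * ‖f‖) = S * ‖f‖ := tsum_mul_right
    exact h1.trans (h2.trans h3.le)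
  set A : Lp ℂ p₁ (volume : Measure (Torus n)) →L[ℂ] Lp ℂ p₂ (volume : Measure (Torus n)) :=
    T.mkContinuous S hTbound with hAdef
  have hAop : IsOp σ A := by
    refine ⟨F₀, hF₀, fun f => ?_⟩
    exact (hsummable f).hasSum
  refine ⟨⟨A, hAop⟩, ?_⟩
  -- part 2: any operator with this symbol is r-nuclear
  rintro B ⟨F', hF', hsumB⟩
  haveI : Nonempty (Fin n) := Fin.pos_iff_nonempty.mp hn
  obtain ⟨d⟩ := nonempty_denumerable (Fin n → ℤ)
  let e : ℕ ≃ (Fin n → ℤ) := (@Denumerable.eqv _ d).symm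
  refine ⟨fun m => coeffCLM n p₁ (e m), fun m => F' (e m), fun f => ?_, ?_⟩
  · have h2 : HasSum ((fun k => fourierCoeffT (⇑f) k • F' k) ∘ e) (B f) :=
      (Equiv.hasSum_iff e).mpr (hsumB f)
    exact h2
  · -- summability of the nuclear bound
    have hsumCr : Summable fun k : Fin n → ℤ => C ^ r * jpW k ^ (-s) :=
      (summable_jpW_rpow hn hs).mul_left _
    have hterm2 : ∀ k : Fin n → ℤ,
        ‖coeffCLM n p₁ k‖ ^ r * ‖F' k‖ ^ r ≤ C ^ r * jpW k ^ (-s) := by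
      intro k
      have h1 : ‖coeffCLM n p₁ k‖ ^ r ≤ 1 :=
        Real.rpow_le_one (norm_nonneg _) (coeffCLM_norm_le k) hr0.le
      have h2 : ‖F' k‖ ^ r ≤ (C * jpW k ^ (-(s/r))) ^ r :=
        Real.rpow_le_rpow (norm_nonneg _) (hFnorm k (F' k) (hF' k)) hr0.le
      have h3 : (C * jpW k ^ (-(s/r))) ^ r = C ^ r * jpW k ^ (-s) := by
        rw [Real.mul_rpow hC.le (Real.rpow_nonneg (jpW_nonneg k) _),
          ← Real.rpow_mul (jpW_nonneg k)]
        congr 1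
        rw [neg_mul, div_mul_cancel₀ s hr]
      calc ‖coeffCLM n p₁ k‖ ^ r * ‖F' k‖ ^ r
          ≤ 1 * (C * jpW k ^ (-(s/r))) ^ r :=
            mul_le_mul h1 h2 (Real.rpow_nonneg (norm_nonneg _) _) zero_le_one
        _ = C ^ r * jpW k ^ (-s) := by rw [one_mul, h3]
    have hsums : Summable fun k : Fin n → ℤ => ‖coeffCLM n p₁ k‖ ^ r * ‖F' k‖ ^ r :=
      Summable.of_nonneg_of_le
        (fun k => mul_nonneg (Real.rpow_nonneg (norm_nonneg _) _)
          (Real.rpow_nonneg (norm_nonneg _) _)) hterm2 hsumCr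
    have := (Equiv.summable_iff (f := fun k : Fin n → ℤ => ‖coeffCLM n p₁ k‖ ^ r * ‖F' k‖ ^ r) e).mpr hsums
    exact this
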